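/- Let G and H be finite groups whose complex group algebras are isomorphic as algebras with a given bijection f : G → H between the bases such that f(g)f(h) + f(h)f(g) = f(gh) + f(hg) in ℂ[H] for all g, h ∈ G (i.e., the symmetrized multiplication tables agree under f). Then G ≅ H. -/

import Mathlib

/-- From an equality of sums of two `Finsupp.single`s with value 1, deduce the
multiset equality of the index pairs. -/
private lemma single_pair {α : Type*} {a b c d : α}
    (h : Finsupp.single a (1 : ℂ) + Finsupp.single b 1
        = Finsupp.single c 1 + Finsupp.single d 1) :
    (a = c ∧ b = d) ∨ (a = d ∧ b = c) := by
  classical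
  by_cases hac : a = c
  · subst hac
    exact Or.inl ⟨rfl, Finsupp.single_left_injective one_ne_zero (add_left_cancel h)⟩
  · have ha := DFunLike.congr_fun h a
    simp only [Finsupp.add_apply, Finsupp.single_eq_same] at ha
    rw [Finsupp.single_eq_of_ne' (Ne.symm hac)] at ha
    have had : a = d := by
      by_contra had
      rw [Finsupp.single_eq_of_ne' (Ne.symm had)] at ha
      rw [Finsupp.single_apply] at ha
      split_ifs at ha <;> norm_num at ha
    subst had
    refine Or.inr ⟨rfl, ?_⟩
    have h' : Finsupp.single a (1:ℂ) + Finsupp.single b 1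
        = Finsupp.single a 1 + Finsupp.single c 1 := by rw [h, add_comm]
    exact Finsupp.single_left_injective one_ne_zero (add_left_cancel h')

/-- The final equational bash for the element `abca`. -/
private lemma killp {H : Type*} [Group H] {A B C Z p : H}
    (hnC : A*B ≠ B*A) (hnB : C*A ≠ A*C)
    (hk1 : A*(B*C) = C*(A*B) → False)
    (hk2 : B*(C*A) = C*(A*B) → False)
    (hZ : Z = A*(B*C))
    (hp1 : p = Z*A ∨ p = A*Z)
    (hp2 : p = (A*B)*(A*C) ∨ p = (A*C)*(A*B)) : False := by
  subst hZ
  rcases hp1 with h1|h1 <;> rcases hp2 with h2|h2 <;> rw [h1] at h2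
  · have h3 : A*(B*(C*A)) = A*(B*(A*C)) := by simpa [mul_assoc] using h2
    exact hnB (mul_left_cancel (mul_left_cancel h3))
  · have h3 : A*(B*(C*A)) = A*(C*(A*B)) := by simpa [mul_assoc] using h2
    exact hk2 (mul_left_cancel h3)
  · have h3 : A*(A*(B*C)) = A*(B*(A*C)) := by simpa [mul_assoc] using h2
    have h4 := mul_left_cancel h3
    rw [← mul_assoc A B C, ← mul_assoc B A C] at h4
    exact hnC (mul_right_cancel h4)
  · have h3 : A*(A*(B*C)) = A*(C*(A*B)) := by simpa [mul_assoc] using h2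
    exact hk1 (mul_left_cancel h3)

/-- Main case bash: given the two kill conditions, the memberships for
`bc`, `abc` and `abca` are contradictory. -/
private lemma caseK {H : Type*} [Group H] {A B C X Z p : H}
    (hnC : A*B ≠ B*A) (hnB : C*A ≠ A*C)
    (hk1 : A*(B*C) = C*(A*B) → False)
    (hk2 : B*(C*A) = C*(A*B) → False)
    (hX : X = B*C ∨ X = C*B)
    (hz1 : Z = A*X ∨ Z = X*A)
    (hz2 : Z = (A*B)*C ∨ Z = C*(A*B))
    (hp1 : p = Z*A ∨ p = A*Z)
    (hp2 : p = (A*B)*(A*C) ∨ p = (A*C)*(A*B)) : False := by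
  have hZ : Z = A*(B*C) := by
    rcases hz2 with h2|h2
    · rw [h2]; exact mul_assoc A B C
    · exfalso
      rcases hX with hXv|hXv
      · rw [hXv] at hz1
        rcases hz1 with h1|h1
        · exact hk1 (h1.symm.trans h2)
        · have e := h1.symm.trans h2
          rw [mul_assoc] at e
          exact hk2 e
      · rw [hXv] at hz1
        rcases hz1 with h1|h1
        · have e := h1.symm.trans h2
          rw [← mul_assoc A C B, ← mul_assoc C A B] at e
          exact hnB (mul_right_cancel e).symm
        · have e := h1.symm.trans h2
          rw [mul_assoc] at e
          exact hnC (mul_left_cancel e).symm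
  exact killp hnC hnB hk1 hk2 hZ hp1 hp2

/-- Bourbaki's exercise, pointwise form: each `a` acts as a homomorphism
or as an antihomomorphism. -/
private lemma step1 {G H : Type*} [Group G] [Group H] (φ : G → H)
    (D : ∀ x y : G, (φ (x*y) = φ x * φ y ∧ φ (y*x) = φ y * φ x) ∨
                    (φ (x*y) = φ y * φ x ∧ φ (y*x) = φ x * φ y)) (a : G) :
    (∀ y, φ (a*y) = φ a * φ y) ∨ (∀ y, φ (a*y) = φ y * φ a) := by
  have mem : ∀ x y : G, φ (x*y) = φ x * φ y ∨ φ (x*y) = φ y * φ x :=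
    fun x y => (D x y).imp And.left And.left
  by_contra hcon
  push_neg at hcon
  obtain ⟨⟨c, hc⟩, ⟨b, hb⟩⟩ := hcon
  obtain ⟨hab, hba⟩ := (D a b).resolve_right (fun hr => hb hr.1)
  obtain ⟨hac, hca⟩ := (D a c).resolve_left (fun hl => hc hl.1)
  have hnC : φ a * φ b ≠ φ b * φ a := fun e => hb (hab.trans e)
  have hnB : φ c * φ a ≠ φ a * φ c := fun e => hc (hac.trans e)
  have hX := mem b c
  have hz1 := mem a (b*c)
  have hz2 := mem (a*b) c
  rw [hab, mul_assoc a b c] at hz2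
  have hp1 := mem (a*(b*c)) a
  have hp2 := mem (a*b) (c*a)
  rw [hab, hca] at hp2
  have e2 : (a*b)*(c*a) = (a*(b*c))*a := by simp [mul_assoc]
  rw [e2] at hp2
  have hv1 := mem c (a*b)
  rw [hab] at hv1
  have hv2 := mem (c*a) b
  rw [hca, mul_assoc c a b] at hv2
  have key : φ b * φ c = φ c * φ b ∨ φ c * (φ a * φ b) = φ b * (φ a * φ c) := by
    rcases hv1 with h1|h1 <;> rcases hv2 with h2|h2
    · have e := h1.symm.trans h2
      rw [← mul_assoc] at e
      exact absurd (mul_right_cancel e) hnB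
    · exact Or.inr (h1.symm.trans h2)
    · have e := h1.symm.trans h2
      rw [mul_assoc, mul_assoc] at e
      exact Or.inl (mul_left_cancel e)
    · have e := h1.symm.trans h2
      rw [← mul_assoc] at e
      exact absurd (mul_right_cancel e) hnC
  rcases key with hBC | hComm
  · refine caseK hnC hnB (fun e => ?_) (fun e => ?_) hX hz1 hz2 hp1 hp2
    · rw [hBC, ← mul_assoc, ← mul_assoc] at e
      exact hnB (mul_right_cancel e).symm
    · rw [← mul_assoc] at e
      rw [hBC] at e
      rw [mul_assoc] at e
      exact hnC (mul_left_cancel e).symm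
  · refine caseK hnC hnB (fun e => ?_) (fun e => ?_) hX hz1 hz2 hp1 hp2
    · rw [hComm] at e
      rw [← mul_assoc, ← mul_assoc] at e
      exact hnC (mul_right_cancel e)
    · rw [hComm] at e
      exact hnB (mul_left_cancel e)

theorem stmt_15 {G H : Type*} [Group G] [Group H] [Finite G] [Finite H]
    (f : G ≃ H)
    (h : ∀ g h' : G,
      MonoidAlgebra.of ℂ H (f g) * MonoidAlgebra.of ℂ H (f h')
        + MonoidAlgebra.of ℂ H (f h') * MonoidAlgebra.of ℂ H (f g)
        = MonoidAlgebra.of ℂ H (f (g * h')) + MonoidAlgebra.of ℂ H (f (h' * g))) :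
    Nonempty (G ≃* H) := by
  have D : ∀ x y : G,
      (f (x*y) = f x * f y ∧ f (y*x) = f y * f x) ∨
      (f (x*y) = f y * f x ∧ f (y*x) = f x * f y) := by
    intro x y
    have hx := h x y
    rw [← map_mul (MonoidAlgebra.of ℂ H) (f x) (f y), ← map_mul (MonoidAlgebra.of ℂ H) (f y) (f x)] at hx
    simp only [MonoidAlgebra.of_apply] at hx
    have hx' : Finsupp.single (f x * f y) (1:ℂ) + Finsupp.single (f y * f x) 1
        = Finsupp.single (f (x*y)) 1 + Finsupp.single (f (y*x)) 1 := congrArg MonoidAlgebra.coeff hx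
    rcases single_pair hx' with ⟨h1,h2⟩|⟨h1,h2⟩
    · exact Or.inl ⟨h1.symm, h2.symm⟩
    · exact Or.inr ⟨h2.symm, h1.symm⟩
  have f1 : f (1:G) = 1 := by
    have e := (D 1 1).elim And.left And.left
    rw [mul_one] at e
    exact (left_eq_mul.mp e)
  have s1 := step1 (fun x => f x) D
  -- P and Q closure facts
  have Pmul : ∀ a b : G, (∀ y, f (a*y) = f a * f y) → (∀ y, f (b*y) = f b * f y) →
      ∀ y, f ((a*b)*y) = f (a*b) * f y := by
    intro a b ha hb y
    rw [mul_assoc, ha, hb, ha, mul_assoc]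
  have Pinv : ∀ a : G, (∀ y, f (a*y) = f a * f y) → ∀ y, f (a⁻¹*y) = f a⁻¹ * f y := by
    intro a ha
    have key : ∀ y, f (a⁻¹ * y) = (f a)⁻¹ * f y := by
      intro y
      have h2 := ha (a⁻¹*y)
      rw [mul_inv_cancel_left] at h2
      exact eq_inv_mul_iff_mul_eq.mpr h2.symm
    have hfa : f a⁻¹ = (f a)⁻¹ := by
      have := key 1
      rwa [mul_one, f1, mul_one] at this
    intro y; rw [key, hfa]
  have Qmul : ∀ a b : G, (∀ y, f (a*y) = f y * f a) → (∀ y, f (b*y) = f y * f b) →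
      ∀ y, f ((a*b)*y) = f y * f (a*b) := by
    intro a b ha hb y
    rw [mul_assoc, ha, hb, ha, mul_assoc]
  have Qinv : ∀ a : G, (∀ y, f (a*y) = f y * f a) → ∀ y, f (a⁻¹*y) = f y * f a⁻¹ := by
    intro a ha
    have key : ∀ y, f (a⁻¹ * y) = f y * (f a)⁻¹ := by
      intro y
      have h2 := ha (a⁻¹*y)
      rw [mul_inv_cancel_left] at h2
      exact eq_mul_inv_iff_mul_eq.mpr h2.symm
    have hfa : f a⁻¹ = (f a)⁻¹ := by
      have := key 1
      rwa [mul_one, f1, one_mul] at this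
    intro y; rw [key, hfa]
  have final : (∀ (a y : G), f (a*y) = f a * f y) ∨ (∀ (a y : G), f (a*y) = f y * f a) := by
    by_contra hco
    push_neg at hco
    obtain ⟨⟨p, y₁, hp⟩, ⟨q, y₂, hq⟩⟩ := hco
    have hQp : ∀ y, f (p*y) = f y * f p := (s1 p).resolve_left (fun hh => hp (hh y₁))
    have hPq : ∀ y, f (q*y) = f q * f y := (s1 q).resolve_right (fun hh => hq (hh y₂))
    rcases s1 (q*p) with hP | hQ
    · apply hp
      have h2 := Pmul _ _ (Pinv q hPq) hP y₁
      rwa [inv_mul_cancel_left] at h2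
    · apply hq
      have h2 := Qmul _ _ hQ (Qinv p hQp) y₂
      rwa [mul_inv_cancel_right] at h2
  rcases final with hHom | hAnti
  · exact ⟨{ toEquiv := f, map_mul' := fun x y => hHom x y }⟩
  · have hAnti' : ∀ x y : G, (f (x*y))⁻¹ = (f x)⁻¹ * (f y)⁻¹ := fun x y => by
      rw [hAnti x y, mul_inv_rev]
    have hli : Function.LeftInverse (fun y => f.symm y⁻¹) (fun x : G => (f x)⁻¹) := fun x => by simp
    have hri : Function.RightInverse (fun y => f.symm y⁻¹) (fun x : G => (f x)⁻¹) := fun y => by simp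
    exact ⟨MulEquiv.mk (Equiv.mk (fun x => (f x)⁻¹) (fun y => f.symm y⁻¹) hli hri)
      (fun x y => hAnti' x y)⟩
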